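/- Let n ≥ 2. For ξ ∈ ℝ, let M₁(ξ) be the n×n symmetric matrix with (1,1) entry ξ and all other entries (M₁)_{ij} = 1/((i + j − 1)(i + j)), and for z ∈ ℝ let M₂(z) be the n×n symmetric matrix with (1,1) entry z and all other entries (M₂)_{ij} = 1/(i + j − 1). Then for every ξ ∈ ℝ: det M₁(ξ) = 0 if and only if det M₂((1 + 1/n)ξ + 1/2 − 1/(2n)) = 0. -/

import Mathlib

open Matrix Polynomial Finset Nat intervalIntegral

lemma gram_posdef {n : ℕ} (w : ℝ → ℝ) (hw : Continuous w)
    (hw0 : ∀ t ∈ Set.Icc (0:ℝ) 1, 0 ≤ w t) (hw1 : ∀ t ∈ Set.Ioo (0:ℝ) 1, 0 < w t)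
    (G : Matrix (Fin n) (Fin n) ℝ)
    (hG : ∀ i j, G i j = ∫ t in (0:ℝ)..1, t ^ (i.val + j.val) * w t) :
    G.PosDef := by
  rw [posDef_iff_dotProduct_mulVec]
  constructor
  · ext i j
    simp only [conjTranspose_apply, star_trivial, hG, Nat.add_comm j.val i.val]
  · intro x hx
    have hc : ∀ (c : ℝ) (m : ℕ), Continuous (fun t : ℝ => c * (t ^ m * w t)) :=
      fun c m => continuous_const.mul ((continuous_pow m).mul hw)
    have key : (star x ⬝ᵥ G.mulVec x) = ∫ t in (0:ℝ)..1, (∑ i : Fin n, x i * t ^ i.val)^2 * w t := by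
      have hpt : ∀ t : ℝ, (∑ i : Fin n, x i * t ^ i.val)^2 * w t
          = ∑ i : Fin n, ∑ j : Fin n, (x i * x j) * (t ^ (i.val + j.val) * w t) := by
        intro t
        rw [sq, Finset.sum_mul_sum, Finset.sum_mul]
        congr 1; ext i
        rw [Finset.sum_mul]
        congr 1; ext j
        rw [pow_add]; ring
      simp only [hpt]
      have hint : ∀ i : Fin n, i ∈ Finset.univ → IntervalIntegrable
          (fun t : ℝ => ∑ j : Fin n, (x i * x j) * (t ^ (i.val + j.val) * w t))
          MeasureTheory.volume 0 1 := by
        intro i _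
        exact (continuous_finset_sum _ (fun j _ => hc _ _)).intervalIntegrable 0 1
      rw [intervalIntegral.integral_finset_sum hint]
      simp only [dotProduct, mulVec, dotProduct, hG, star_trivial]
      refine Finset.sum_congr rfl fun i _ => ?_
      rw [intervalIntegral.integral_finset_sum (fun j _ => (hc _ _).intervalIntegrable 0 1),
        Finset.mul_sum]
      refine Finset.sum_congr rfl fun j _ => ?_
      rw [intervalIntegral.integral_const_mul]; ring
    rw [key]
    obtain ⟨t₀, ht₀, hpt₀⟩ : ∃ t₀ ∈ Set.Ioo (0:ℝ) 1, (∑ i : Fin n, x i * t₀ ^ i.val) ≠ 0 := by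
      by_contra h
      push_neg at h
      apply hx
      have hP : (∑ i : Fin n, (Polynomial.monomial i.val (x i) : ℝ[X])) = 0 := by
        apply Polynomial.eq_zero_of_infinite_isRoot
        apply (Set.Ioo_infinite (by norm_num : (0:ℝ) < 1)).mono
        intro t ht
        simp only [Set.mem_setOf_eq, IsRoot, Polynomial.eval_finset_sum, eval_monomial]
        exact h t ht
      funext i
      have h2 := congrArg (Polynomial.coeff · i.val) hP
      simp only [Polynomial.finset_sum_coeff, Polynomial.coeff_monomial, coeff_zero] at h2
      rw [Finset.sum_eq_single i] at h2
      · simpa using h2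
      · intro j _ hji
        rw [if_neg (fun hh => hji (Fin.ext hh))]
      · simp
    have hlt := intervalIntegral.integral_lt_integral_of_continuousOn_of_le_of_exists_lt
      (f := fun _ => (0:ℝ)) (g := fun t => (∑ i : Fin n, x i * t ^ i.val)^2 * w t)
      one_pos
      continuousOn_const
      (Continuous.continuousOn
        (((continuous_finset_sum _ (fun i _ => continuous_const.mul (continuous_pow _))).pow 2).mul hw))
      (fun t ht => mul_nonneg (sq_nonneg _) (hw0 t ⟨le_of_lt ht.1, ht.2⟩))
      ⟨t₀, ⟨le_of_lt ht₀.1, le_of_lt ht₀.2⟩, mul_pos (by positivity) (hw1 t₀ ht₀)⟩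
    simpa using hlt

lemma pr1 (n : ℕ) : ∏ k ∈ range n, ((k:ℝ)+1) = (n ! : ℝ) := by
  rw [← Finset.prod_range_add_one_eq_factorial]; push_cast; norm_num

lemma pr2 (n : ℕ) : ∏ k ∈ range n, ((k:ℝ)+2) = ((n+1)! : ℝ) := by
  induction n with
  | zero => simp
  | succ m ih =>
      rw [Finset.prod_range_succ, ih]
      have h : (m+1+1)! = (m+2) * (m+1)! := Nat.factorial_succ (m+1)
      rw [h]; push_cast; ring

lemma prod_neg (m : ℕ) (f : ℕ → ℝ) :
    ∏ k ∈ range m, (-(f k)) = (-1)^m * ∏ k ∈ range m, f k := by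
  induction m with
  | zero => simp
  | succ p ih => rw [Finset.prod_range_succ, Finset.prod_range_succ, ih, pow_succ]; ring

lemma fact_eq (n : ℕ) (hn : 0 < n) : n ! = n * (n-1)! := by
  cases n with
  | zero => omega
  | succ m => simp [Nat.factorial_succ]

lemma hilbert_solve (n : ℕ) (hn : 0 < n) :
    ∃ x : Fin n → ℝ, x ⟨0, hn⟩ = (n:ℝ)^2 ∧
      ∀ i : Fin n, ∑ j : Fin n, x j / ((i.val:ℝ) + (j.val:ℝ) + 1) =
        if i.val = 0 then 1 else 0 := by
  set A : ℝ := (-1)^(n-1) * n with hA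
  set den : Fin n → ℝ := fun j => ∏ k ∈ (range n).erase j.val, ((k:ℝ) - (j.val:ℝ)) with hden
  have hden_ne : ∀ j : Fin n, den j ≠ 0 := by
    intro j
    simp only [hden]
    apply Finset.prod_ne_zero_iff.mpr
    intro k hk
    exact sub_ne_zero.mpr (by exact_mod_cast Finset.ne_of_mem_erase hk)
  set x : Fin n → ℝ :=
    fun j => (A * ∏ k ∈ range (n-1), (-((j.val:ℝ)+1) - ((k:ℝ)+1))) / den j with hx
  set L : Fin n → Polynomial ℝ :=
    fun j => ∏ k ∈ (range n).erase j.val, (X + C ((k:ℝ)+1)) with hL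
  set P : Polynomial ℝ := ∑ j : Fin n, C (x j) * L j with hP
  set Q : Polynomial ℝ := C A * ∏ k ∈ range (n-1), (X - C ((k:ℝ)+1)) with hQ
  have hLdeg : ∀ j : Fin n, (L j).degree = ((n-1 : ℕ) : WithBot ℕ) := by
    intro j
    rw [hL, Polynomial.degree_prod]
    simp only [Polynomial.degree_X_add_C, Finset.sum_const,
      Finset.card_erase_of_mem (Finset.mem_range.mpr j.isLt), Finset.card_range,
      nsmul_eq_mul, mul_one]
  have hcast : ((n-1 : ℕ) : WithBot ℕ) < (n : WithBot ℕ) := by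
    exact_mod_cast Nat.sub_lt hn one_pos
  set s : Finset ℝ := (range n).image (fun m : ℕ => -((m:ℝ)+1)) with hs
  have hinj : Function.Injective (fun m : ℕ => -((m:ℝ)+1)) := by
    intro a b h
    simp only [neg_inj, add_left_inj] at h
    exact_mod_cast h
  have hcard : #s = n := by rw [hs, Finset.card_image_of_injective _ hinj, Finset.card_range]
  have hPQ : P = Q := by
    apply Polynomial.eq_of_degrees_lt_of_eval_finset_eq s
    · rw [hcard]
      refine lt_of_le_of_lt (Polynomial.degree_sum_le _ _) ?_
      rw [Finset.sup_lt_iff (by exact_mod_cast WithBot.bot_lt_coe n)]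
      intro j _
      refine lt_of_le_of_lt (Polynomial.degree_mul_le _ _) ?_
      refine lt_of_le_of_lt (add_le_add Polynomial.degree_C_le (le_of_eq (hLdeg j))) ?_
      rw [zero_add]; exact hcast
    · rw [hcard]
      refine lt_of_le_of_lt (Polynomial.degree_mul_le _ _) ?_
      refine lt_of_le_of_lt (add_le_add Polynomial.degree_C_le (le_of_eq (Polynomial.degree_prod _ _))) ?_
      rw [zero_add]
      simp only [Polynomial.degree_X_sub_C, Finset.sum_const, Finset.card_range, nsmul_eq_mul, mul_one]
      exact hcast
    · intro r hr
      rw [hs, Finset.mem_image] at hr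
      obtain ⟨m, hm, rfl⟩ := hr
      rw [Finset.mem_range] at hm
      rw [hP, Polynomial.eval_finset_sum]
      rw [Finset.sum_eq_single ⟨m, hm⟩]
      · simp only [Polynomial.eval_mul, Polynomial.eval_C, hL, Polynomial.eval_prod,
          Polynomial.eval_add, Polynomial.eval_X]
        have hprod : ∏ k ∈ (range n).erase m, (-((m:ℝ)+1) + ((k:ℝ)+1))
            = den ⟨m, hm⟩ := by
          simp only [hden]
          exact Finset.prod_congr rfl fun k _ => by push_cast; ring
        have hprod' : ∏ k ∈ (range n).erase ((⟨m, hm⟩ : Fin n)).val, (-((m:ℝ)+1) + ((k:ℝ)+1))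
            = den ⟨m, hm⟩ := hprod
        rw [hprod', hx]
        rw [div_mul_cancel₀ _ (hden_ne ⟨m, hm⟩)]
        rw [hQ]
        simp only [Polynomial.eval_mul, Polynomial.eval_C, Polynomial.eval_prod,
          Polynomial.eval_sub, Polynomial.eval_X]
      · intro j _ hj
        simp only [Polynomial.eval_mul, Polynomial.eval_C, hL, Polynomial.eval_prod,
          Polynomial.eval_add, Polynomial.eval_X]
        refine mul_eq_zero_of_right _ (Finset.prod_eq_zero (i := m) ?_ (by push_cast; ring))
        refine Finset.mem_erase.mpr ⟨?_, Finset.mem_range.mpr hm⟩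
        exact fun h => hj (Fin.ext h.symm)
      · intro h
        exact absurd (Finset.mem_univ _) h
  have hsign : A * (-1)^(n-1) = (n:ℝ) := by
    rw [hA, mul_comm ((-1:ℝ)^(n-1)) (n:ℝ), mul_assoc, ← pow_add]
    simp [← two_mul, pow_mul]
  have hfacne : (((n-1)! : ℕ) : ℝ) ≠ 0 := by positivity
  have hQ0 : Polynomial.eval 0 Q = (n:ℝ) * (((n-1)! : ℕ) : ℝ) := by
    rw [hQ]
    simp only [Polynomial.eval_mul, Polynomial.eval_C, Polynomial.eval_prod,
      Polynomial.eval_sub, Polynomial.eval_X]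
    have h2 : ∏ k ∈ range (n-1), ((0:ℝ) - ((k:ℝ)+1))
        = (-1)^(n-1) * ∏ k ∈ range (n-1), ((k:ℝ)+1) := by
      rw [← prod_neg]
      exact Finset.prod_congr rfl fun k _ => by ring
    rw [h2, ← mul_assoc, hsign, pr1]
  have hden0 : den ⟨0, hn⟩ = (((n-1)! : ℕ) : ℝ) := by
    simp only [hden]
    have hset : (range n).erase (0:ℕ) = Ico 1 n := by
      ext k; simp only [Finset.mem_erase, Finset.mem_range, Finset.mem_Ico]; omega
    have hcg : ∀ k ∈ (range n).erase ((⟨0,hn⟩ : Fin n)).val,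
        ((k:ℝ) - (((⟨0,hn⟩ : Fin n)).val:ℝ)) = ((k:ℕ):ℝ) := fun k _ => by
      push_cast; ring
    rw [Finset.prod_congr rfl hcg]
    show ∏ k ∈ (range n).erase 0, ((k:ℕ):ℝ) = _
    rw [hset, ← Nat.cast_prod]
    congr 1
    conv_lhs => rw [show n = (n-1)+1 by omega]
    exact Finset.prod_Ico_id_eq_factorial (n-1)
  refine ⟨x, ?_, ?_⟩
  · -- x 0 = n^2
    simp only [hx]
    have h2 : ∏ k ∈ range (n-1), (-((((⟨0,hn⟩:Fin n).val):ℝ)+1) - ((k:ℝ)+1))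
        = (-1)^(n-1) * ∏ k ∈ range (n-1), ((k:ℝ)+2) := by
      rw [← prod_neg]
      refine Finset.prod_congr rfl fun k _ => ?_
      show -((((0:ℕ)):ℝ)+1) - ((k:ℝ)+1) = -((k:ℝ)+2)
      push_cast; ring
    rw [h2, ← mul_assoc, hsign, pr2, hden0]
    rw [show n - 1 + 1 = n by omega]
    rw [fact_eq n hn]
    push_cast
    field_simp
  · -- the linear system
    intro i
    have e := congrArg (Polynomial.eval ((i.val:ℝ))) hPQ
    simp only [hP, Polynomial.eval_finset_sum, Polynomial.eval_mul, Polynomial.eval_C, hL,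
      Polynomial.eval_prod, Polynomial.eval_add, Polynomial.eval_X] at e
    set D : ℝ := ∏ k ∈ range n, ((i.val:ℝ) + ((k:ℝ)+1)) with hD
    have hD_ne : D ≠ 0 := by
      rw [hD]
      apply Finset.prod_ne_zero_iff.mpr
      intro k _
      positivity
    have hsum : (∑ j : Fin n, x j / ((i.val:ℝ) + (j.val:ℝ) + 1)) * D
        = Polynomial.eval ((i.val:ℝ)) Q := by
      rw [← e, Finset.sum_mul]
      refine Finset.sum_congr rfl fun j _ => ?_
      have hmem : j.val ∈ range n := Finset.mem_range.mpr j.isLt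
      have hDj : D = ((i.val:ℝ) + ((j.val:ℝ)+1)) *
          ∏ k ∈ (range n).erase j.val, ((i.val:ℝ) + ((k:ℝ)+1)) :=
        (Finset.mul_prod_erase (range n) _ hmem).symm
      rw [hDj]
      have hne : ((i.val:ℝ) + (j.val:ℝ) + 1) ≠ 0 := by positivity
      field_simp
      ring
    by_cases hi : i.val = 0
    · rw [if_pos hi]
      rw [hi] at hsum
      simp only [Nat.cast_zero] at hsum
      rw [hQ0] at hsum
      have hDval : D = ((n ! : ℕ) : ℝ) := by
        rw [hD, hi]
        simp only [Nat.cast_zero, zero_add]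
        exact pr1 n
      rw [hDval, fact_eq n hn] at hsum
      push_cast at hsum
      have hprod_ne : ((n:ℝ) * (((n-1)! : ℕ)) : ℝ) ≠ 0 := by positivity
      apply mul_right_cancel₀ hprod_ne
      rw [one_mul]
      rw [hi]
      simp only [Nat.cast_zero]
      push_cast
      linarith [hsum]
    · rw [if_neg hi]
      have hQi : Polynomial.eval ((i.val:ℝ)) Q = 0 := by
        rw [hQ]
        simp only [Polynomial.eval_mul, Polynomial.eval_C, Polynomial.eval_prod,
          Polynomial.eval_sub, Polynomial.eval_X]
        refine mul_eq_zero_of_right _ (Finset.prod_eq_zero (i := i.val - 1) ?_ ?_)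
        · exact Finset.mem_range.mpr (by omega)
        · have h3 : ((i.val - 1 : ℕ):ℝ) = (i.val:ℝ) - 1 := by
            have h4 : 1 ≤ i.val := Nat.one_le_iff_ne_zero.mpr hi
            push_cast [Nat.cast_sub h4]
            ring
          rw [h3]; ring
      rw [hQi] at hsum
      exact (mul_eq_zero.mp hsum).resolve_right hD_ne

lemma pr1' (n : ℕ) : ∏ k ∈ range n, ((k:ℝ)+1) = (n ! : ℝ) := by
  rw [← Finset.prod_range_add_one_eq_factorial]; push_cast; norm_num

lemma pr2' (n : ℕ) : ∏ k ∈ range n, ((k:ℝ)+2) = ((n+1)! : ℝ) := by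
  induction n with
  | zero => simp
  | succ m ih =>
      rw [Finset.prod_range_succ, ih]
      have h : (m+1+1)! = (m+2) * (m+1)! := Nat.factorial_succ (m+1)
      rw [h]; push_cast; ring

lemma prod_neg' (m : ℕ) (f : ℕ → ℝ) :
    ∏ k ∈ range m, (-(f k)) = (-1)^m * ∏ k ∈ range m, f k := by
  induction m with
  | zero => simp
  | succ p ih => rw [Finset.prod_range_succ, Finset.prod_range_succ, ih, pow_succ]; ring

lemma fact_eq' (n : ℕ) (hn : 0 < n) : n ! = n * (n-1)! := by
  cases n with
  | zero => omega
  | succ m => simp [Nat.factorial_succ]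

/-- removed-index set for the two-pole case -/
def bS (n j : ℕ) : Finset ℕ := (range (n+1)) \ {j, j+1}

noncomputable def bnum (n m : ℕ) : ℝ :=
  ((-1)^(n-1) * ((n:ℝ)*((n:ℝ)+1))) * ∏ k ∈ range (n-1), (-((m:ℝ)+1) - ((k:ℝ)+1))

noncomputable def ba (n m : ℕ) : ℝ := ∏ k ∈ bS n m, ((k:ℝ) - (m:ℝ))

noncomputable def bb (n m : ℕ) : ℝ := ∏ k ∈ bS n (m-1), ((k:ℝ) - (m:ℝ))

noncomputable def yrec (n : ℕ) : ℕ → ℝ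
  | 0 => bnum n 0 / ba n 0
  | (m+1) => (bnum n (m+1) - yrec n m * bb n (m+1)) / ba n (m+1)

lemma ba_ne (n m : ℕ) : ba n m ≠ 0 := by
  apply Finset.prod_ne_zero_iff.mpr
  intro k hk
  have : k ≠ m := by
    rw [bS, Finset.mem_sdiff] at hk
    simp only [Finset.mem_insert, Finset.mem_singleton] at hk
    exact fun h => hk.2 (Or.inl h)
  exact sub_ne_zero.mpr (by exact_mod_cast this)

lemma yrec_zero (n : ℕ) : yrec n 0 * ba n 0 = bnum n 0 := by
  rw [yrec, div_mul_cancel₀ _ (ba_ne n 0)]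

lemma yrec_succ (n m : ℕ) :
    yrec n (m+1) * ba n (m+1) + yrec n m * bb n (m+1) = bnum n (m+1) := by
  rw [yrec, div_mul_cancel₀ _ (ba_ne n (m+1))]
  ring

lemma bsolve (n : ℕ) (hn : 0 < n) :
    ∃ y : Fin n → ℝ, y ⟨0, hn⟩ = (n:ℝ)*((n:ℝ)+1) ∧
      ∀ i : Fin n, ∑ j : Fin n,
          y j / (((i.val:ℝ) + (j.val:ℝ) + 1) * ((i.val:ℝ) + (j.val:ℝ) + 2)) =
        if i.val = 0 then 1 else 0 := by
  set A : ℝ := (-1)^(n-1) * ((n:ℝ)*((n:ℝ)+1)) with hA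
  set y : Fin n → ℝ := fun j => yrec n j.val with hy
  set L : Fin n → Polynomial ℝ :=
    fun j => ∏ k ∈ bS n j.val, (X + C ((k:ℝ)+1)) with hL
  set P : Polynomial ℝ := ∑ j : Fin n, C (y j) * L j with hP
  set Q : Polynomial ℝ := C A * ∏ k ∈ range (n-1), (X - C ((k:ℝ)+1)) with hQ
  have hSsub : ∀ j : Fin n, ({j.val, j.val+1} : Finset ℕ) ⊆ range (n+1) := by
    intro j k hk
    simp only [Finset.mem_insert, Finset.mem_singleton] at hk
    rw [Finset.mem_range]
    rcases hk with h | h <;> omega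
  have hScard : ∀ j : Fin n, #(bS n j.val) = n - 1 := by
    intro j
    rw [bS, Finset.card_sdiff_of_subset (hSsub j), Finset.card_range]
    rw [Finset.card_insert_of_notMem (by simp), Finset.card_singleton]
    omega
  have hLdeg : ∀ j : Fin n, (L j).degree = ((n-1 : ℕ) : WithBot ℕ) := by
    intro j
    rw [hL, Polynomial.degree_prod]
    simp only [Polynomial.degree_X_add_C, Finset.sum_const, hScard j, nsmul_eq_mul, mul_one]
  have hcast : ((n-1 : ℕ) : WithBot ℕ) < (n : WithBot ℕ) := by
    exact_mod_cast Nat.sub_lt hn one_pos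
  set s : Finset ℝ := (range n).image (fun m : ℕ => -((m:ℝ)+1)) with hs
  have hinj : Function.Injective (fun m : ℕ => -((m:ℝ)+1)) := by
    intro a b h
    simp only [neg_inj, add_left_inj] at h
    exact_mod_cast h
  have hcard : #s = n := by rw [hs, Finset.card_image_of_injective _ hinj, Finset.card_range]
  -- vanishing of a term at -(m+1) when m ∉ {j, j+1}
  have hvanish : ∀ (m : ℕ), m < n → ∀ j : Fin n, j.val ≠ m → j.val + 1 ≠ m →
      ∏ k ∈ bS n j.val, (-((m:ℝ)+1) + ((k:ℝ)+1)) = 0 := by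
    intro m hm j h1 h2
    refine Finset.prod_eq_zero (i := m) ?_ (by push_cast; ring)
    rw [bS, Finset.mem_sdiff, Finset.mem_range]
    refine ⟨by omega, ?_⟩
    simp only [Finset.mem_insert, Finset.mem_singleton]
    push_neg
    omega
  have hprodcg : ∀ (m : ℕ) (T : Finset ℕ),
      ∏ k ∈ T, (-((m:ℝ)+1) + ((k:ℝ)+1)) = ∏ k ∈ T, ((k:ℝ) - (m:ℝ)) :=
    fun m T => Finset.prod_congr rfl fun k _ => by ring
  have hPQ : P = Q := by
    apply Polynomial.eq_of_degrees_lt_of_eval_finset_eq s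
    · rw [hcard]
      refine lt_of_le_of_lt (Polynomial.degree_sum_le _ _) ?_
      rw [Finset.sup_lt_iff (by exact_mod_cast WithBot.bot_lt_coe n)]
      intro j _
      refine lt_of_le_of_lt (Polynomial.degree_mul_le _ _) ?_
      refine lt_of_le_of_lt (add_le_add Polynomial.degree_C_le (le_of_eq (hLdeg j))) ?_
      rw [zero_add]; exact hcast
    · rw [hcard]
      refine lt_of_le_of_lt (Polynomial.degree_mul_le _ _) ?_
      refine lt_of_le_of_lt (add_le_add Polynomial.degree_C_le (le_of_eq (Polynomial.degree_prod _ _))) ?_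
      rw [zero_add]
      simp only [Polynomial.degree_X_sub_C, Finset.sum_const, Finset.card_range, nsmul_eq_mul, mul_one]
      exact hcast
    · intro r hr
      rw [hs, Finset.mem_image] at hr
      obtain ⟨m, hm, rfl⟩ := hr
      rw [Finset.mem_range] at hm
      rw [hP, Polynomial.eval_finset_sum]
      simp only [Polynomial.eval_mul, Polynomial.eval_C, hL, Polynomial.eval_prod,
        Polynomial.eval_add, Polynomial.eval_X]
      have hQeval : Polynomial.eval (-((m:ℝ)+1)) Q = bnum n m := by
        rw [hQ, bnum]
        simp only [Polynomial.eval_mul, Polynomial.eval_C, Polynomial.eval_prod,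
          Polynomial.eval_sub, Polynomial.eval_X]
        rw [hA]
      rw [hQeval]
      rcases Nat.eq_zero_or_pos m with hm0 | hmpos
      · subst hm0
        rw [Finset.sum_eq_single ⟨0, hn⟩]
        · show y ⟨0, hn⟩ * ∏ k ∈ bS n 0, (-(((0:ℕ):ℝ) + 1) + ((k:ℝ) + 1)) = bnum n 0
          have e0 : ∏ k ∈ bS n 0, (-(((0:ℕ):ℝ) + 1) + ((k:ℝ) + 1)) = ba n 0 := by
            rw [ba]
            exact Finset.prod_congr rfl fun k _ => by push_cast; ring
          rw [e0]
          exact yrec_zero n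
        · intro j _ hj
          have h1 : j.val ≠ 0 := fun h => hj (Fin.ext h)
          exact mul_eq_zero_of_right _ (hvanish 0 hn j h1 (by omega))
        · intro h; exact absurd (Finset.mem_univ _) h
      · -- two surviving terms
        have hmlt : m - 1 < n := by omega
        have hpair_ne : (⟨m-1, hmlt⟩ : Fin n) ≠ ⟨m, hm⟩ := by
          intro h
          simp only [Fin.mk.injEq] at h
          omega
        rw [← Finset.sum_subset (Finset.subset_univ ({⟨m-1, hmlt⟩, ⟨m, hm⟩} : Finset (Fin n)))]
        · rw [Finset.sum_pair hpair_ne]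
          have e1 : ∏ k ∈ bS n ((⟨m-1, hmlt⟩ : Fin n)).val, (-((m:ℝ)+1) + ((k:ℝ)+1)) = bb n m := by
            rw [bb]
            show ∏ k ∈ bS n (m-1), _ = _
            exact hprodcg m _
          have e2 : ∏ k ∈ bS n ((⟨m, hm⟩ : Fin n)).val, (-((m:ℝ)+1) + ((k:ℝ)+1)) = ba n m := by
            rw [ba]
            show ∏ k ∈ bS n m, _ = _
            exact hprodcg m _
          rw [e1, e2]
          have hm1 : m = (m-1)+1 := by omega
          show y ⟨m-1, hmlt⟩ * bb n m + y ⟨m, hm⟩ * ba n m = bnum n m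
          rw [hy]
          show yrec n (m-1) * bb n m + yrec n m * ba n m = bnum n m
          conv_lhs => rw [hm1]
          conv_rhs => rw [hm1]
          rw [add_comm]
          exact yrec_succ n (m-1)
        · intro j _ hj
          simp only [Finset.mem_insert, Finset.mem_singleton] at hj
          push_neg at hj
          have h1 : j.val ≠ m := fun h => hj.2 (Fin.ext h)
          have h2 : j.val + 1 ≠ m := by
            intro h
            apply hj.1
            apply Fin.ext
            show j.val = m - 1
            omega
          exact mul_eq_zero_of_right _ (hvanish m hm j h1 h2)
  have hsign : A * (-1)^(n-1) = (n:ℝ)*((n:ℝ)+1) := by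
    rw [hA, mul_comm ((-1:ℝ)^(n-1)) _, mul_assoc, ← pow_add]
    simp [← two_mul, pow_mul]
  have hfacne : ((n ! : ℕ) : ℝ) ≠ 0 := by positivity
  have hQ0 : Polynomial.eval 0 Q = ((n:ℝ)*((n:ℝ)+1)) * (((n-1)! : ℕ) : ℝ) := by
    rw [hQ]
    simp only [Polynomial.eval_mul, Polynomial.eval_C, Polynomial.eval_prod,
      Polynomial.eval_sub, Polynomial.eval_X]
    have h2 : ∏ k ∈ range (n-1), ((0:ℝ) - ((k:ℝ)+1))
        = (-1)^(n-1) * ∏ k ∈ range (n-1), ((k:ℝ)+1) := by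
      rw [← prod_neg']
      exact Finset.prod_congr rfl fun k _ => by ring
    rw [h2, ← mul_assoc, hsign, pr1']
  have hba0 : ba n 0 = ((n ! : ℕ) : ℝ) := by
    rw [ba]
    have hset : bS n 0 = Ico 2 (n+1) := by
      ext k
      simp only [bS, Finset.mem_sdiff, Finset.mem_range, Finset.mem_Ico,
        Finset.mem_insert, Finset.mem_singleton]
      omega
    have hcg : ∀ k ∈ bS n 0, ((k:ℝ) - ((0:ℕ):ℝ)) = ((k:ℕ):ℝ) := fun k _ => by push_cast; ring
    rw [Finset.prod_congr rfl hcg, hset, ← Nat.cast_prod]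
    congr 1
    have h5 := Finset.prod_eq_prod_Ico_succ_bot (show 1 < n+1 by omega) (fun k => k)
    have h6 := Finset.prod_Ico_id_eq_factorial n
    rw [← h6, h5, one_mul]
  have hy0 : y ⟨0, hn⟩ = (n:ℝ)*((n:ℝ)+1) := by
    have h1 : y ⟨0, hn⟩ * ba n 0 = bnum n 0 := yrec_zero n
    have h2 : bnum n 0 = ((n:ℝ)*((n:ℝ)+1)) * ((n ! : ℕ) : ℝ) := by
      rw [bnum]
      have h3 : ∏ k ∈ range (n-1), (-(((0:ℕ):ℝ)+1) - ((k:ℝ)+1))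
          = (-1)^(n-1) * ∏ k ∈ range (n-1), ((k:ℝ)+2) := by
        rw [← prod_neg']
        exact Finset.prod_congr rfl fun k _ => by push_cast; ring
      rw [h3, ← mul_assoc, hsign, pr2', show n - 1 + 1 = n by omega]
    rw [hba0, h2] at h1
    exact mul_right_cancel₀ hfacne h1
  refine ⟨y, hy0, ?_⟩
  intro i
  have e := congrArg (Polynomial.eval ((i.val:ℝ))) hPQ
  simp only [hP, Polynomial.eval_finset_sum, Polynomial.eval_mul, Polynomial.eval_C, hL,
    Polynomial.eval_prod, Polynomial.eval_add, Polynomial.eval_X] at e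
  set D : ℝ := ∏ k ∈ range (n+1), ((i.val:ℝ) + ((k:ℝ)+1)) with hD
  have hD_ne : D ≠ 0 := by
    rw [hD]
    apply Finset.prod_ne_zero_iff.mpr
    intro k _
    positivity
  have hsum : (∑ j : Fin n, y j / (((i.val:ℝ) + (j.val:ℝ) + 1) * ((i.val:ℝ) + (j.val:ℝ) + 2))) * D
      = Polynomial.eval ((i.val:ℝ)) Q := by
    rw [← e, Finset.sum_mul]
    refine Finset.sum_congr rfl fun j _ => ?_
    have hDj : D = (∏ k ∈ bS n j.val, ((i.val:ℝ) + ((k:ℝ)+1))) *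
        (((i.val:ℝ) + ((j.val:ℝ)+1)) * ((i.val:ℝ) + ((((j.val:ℕ)+1:ℕ):ℝ)+1))) := by
      rw [hD, ← Finset.prod_sdiff (hSsub j)]
      congr 1
      rw [Finset.prod_pair (by omega : j.val ≠ j.val + 1)]
    rw [hDj]
    have hne1 : ((i.val:ℝ) + (j.val:ℝ) + 1) ≠ 0 := by positivity
    have hne2 : ((i.val:ℝ) + (j.val:ℝ) + 2) ≠ 0 := by positivity
    push_cast
    field_simp
    ring
  by_cases hi : i.val = 0
  · rw [if_pos hi]
    rw [hi] at hsum
    simp only [Nat.cast_zero] at hsum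
    rw [hQ0] at hsum
    have hDval : D = (((n+1)! : ℕ) : ℝ) := by
      rw [hD, hi]
      simp only [Nat.cast_zero, zero_add]
      exact pr1' (n+1)
    rw [hDval] at hsum
    have hfact : (((n+1)! : ℕ) : ℝ) = ((n:ℝ)+1) * (n:ℝ) * (((n-1)! : ℕ) : ℝ) := by
      rw [Nat.factorial_succ, fact_eq' n hn]
      push_cast
      ring
    rw [hfact] at hsum
    have hprod_ne : (((n:ℝ)+1) * (n:ℝ) * (((n-1)! : ℕ) : ℝ)) ≠ 0 := by positivity
    apply mul_right_cancel₀ hprod_ne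
    rw [one_mul, hi]
    simp only [Nat.cast_zero]
    rw [hsum]
    ring
  · rw [if_neg hi]
    have hQi : Polynomial.eval ((i.val:ℝ)) Q = 0 := by
      rw [hQ]
      simp only [Polynomial.eval_mul, Polynomial.eval_C, Polynomial.eval_prod,
        Polynomial.eval_sub, Polynomial.eval_X]
      refine mul_eq_zero_of_right _ (Finset.prod_eq_zero (i := i.val - 1) ?_ ?_)
      · exact Finset.mem_range.mpr (by omega)
      · have h3 : ((i.val - 1 : ℕ):ℝ) = (i.val:ℝ) - 1 := by
          have h4 : 1 ≤ i.val := Nat.one_le_iff_ne_zero.mpr hi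
          push_cast [Nat.cast_sub h4]
          ring
        rw [h3]; ring
    rw [hQi] at hsum
    exact (mul_eq_zero.mp hsum).resolve_right hD_ne

lemma det_update {n : ℕ} (i0 : Fin n) (G : Matrix (Fin n) (Fin n) ℝ) (x : Fin n → ℝ)
    (hx : G.mulVec x = (Pi.single i0 1 : Fin n → ℝ)) (c : ℝ) :
    (G.updateRow i0 (G i0 + c • (Pi.single i0 1 : Fin n → ℝ))).det = G.det * (1 + c * x i0) := by
  rw [det_updateRow_add, det_updateRow_smul, updateRow_eq_self]
  have hadj : (G.updateRow i0 (Pi.single i0 1)).det = adjugate G i0 i0 :=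
    (adjugate_apply _ _ _).symm
  rw [hadj]
  have h2 : G.adjugate *ᵥ (G *ᵥ x) = G.det • x := by
    rw [mulVec_mulVec, adjugate_mul, smul_mulVec, one_mulVec]
  rw [hx] at h2
  have h3 := congrFun h2 i0
  rw [mulVec_single_one] at h3
  simp only [mul_one, Matrix.col_apply, Pi.smul_apply, smul_eq_mul] at h3
  rw [h3]
  ring

-- entry integral identities
lemma entry1 (m : ℕ) : ∫ t in (0:ℝ)..1, t^m * (fun _ : ℝ => (1:ℝ)) t = 1/((m:ℝ)+1) := by
  simp only [mul_one]
  rw [integral_pow]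
  norm_num

lemma entry2 (m : ℕ) : ∫ t in (0:ℝ)..1, t^m * (fun s : ℝ => 1 - s) t
    = 1/(((m:ℝ)+1)*((m:ℝ)+2)) := by
  have h1 : ∀ t : ℝ, t^m * (1 - t) = t^m - t^(m+1) := fun t => by ring
  simp only [h1]
  rw [intervalIntegral.integral_sub ((continuous_pow m).intervalIntegrable 0 1)
    ((continuous_pow (m+1)).intervalIntegrable 0 1), integral_pow, integral_pow]
  have hm1 : ((m:ℝ)+1) ≠ 0 := by positivity
  have hm2 : ((m:ℝ)+2) ≠ 0 := by positivity
  push_cast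
  rw [div_sub_div _ _ (by positivity) (by positivity), div_eq_div_iff (by positivity) (by positivity)]
  ring

/-- For all `ξ`, `det M₁(ξ) = 0` iff `det M₂((1 + 1/n)ξ + 1/2 − 1/(2n)) = 0`, where
`M₁(ξ)` has `(1,1)` entry `ξ` and other entries `1/((i+j−1)(i+j))`, and `M₂(z)` has
`(1,1)` entry `z` and other entries `1/(i+j−1)`. -/
theorem stmt10 (n : ℕ) (hn : 2 ≤ n)
    (M₁ M₂ : ℝ → Matrix (Fin n) (Fin n) ℝ)
    (hM₁ : ∀ ξ, M₁ ξ = Matrix.of fun i j : Fin n =>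
      if i.val = 0 ∧ j.val = 0 then ξ
      else (1 : ℝ) / (((i.val + j.val + 1 : ℕ) : ℝ) * ((i.val + j.val + 2 : ℕ) : ℝ)))
    (hM₂ : ∀ z, M₂ z = Matrix.of fun i j : Fin n =>
      if i.val = 0 ∧ j.val = 0 then z
      else (1 : ℝ) / ((i.val + j.val + 1 : ℕ) : ℝ)) :
    ∀ ξ : ℝ, (M₁ ξ).det = 0 ↔
      (M₂ ((1 + 1 / (n : ℝ)) * ξ + 1 / 2 - 1 / (2 * (n : ℝ)))).det = 0 := by
  intro ξ
  have hn0 : 0 < n := by omega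
  set i0 : Fin n := ⟨0, hn0⟩ with hi0
  set z : ℝ := (1 + 1 / (n : ℝ)) * ξ + 1 / 2 - 1 / (2 * (n : ℝ)) with hz
  set H : Matrix (Fin n) (Fin n) ℝ := Matrix.of fun i j : Fin n =>
    (1 : ℝ) / ((i.val + j.val + 1 : ℕ) : ℝ) with hH
  set B : Matrix (Fin n) (Fin n) ℝ := Matrix.of fun i j : Fin n =>
    (1 : ℝ) / (((i.val + j.val + 1 : ℕ) : ℝ) * ((i.val + j.val + 2 : ℕ) : ℝ)) with hB
  have hHpos : H.PosDef := by
    apply gram_posdef (fun _ => (1:ℝ)) continuous_const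
      (fun t _ => by norm_num) (fun t _ => by norm_num)
    intro i j
    rw [hH, Matrix.of_apply, entry1 (i.val + j.val)]
    push_cast
    ring
  have hBpos : B.PosDef := by
    apply gram_posdef (fun s => 1 - s) (continuous_const.sub continuous_id)
      (fun t ht => by simp; linarith [ht.2]) (fun t ht => by simp; linarith [ht.2])
    intro i j
    rw [hB, Matrix.of_apply, entry2 (i.val + j.val)]
    push_cast
    ring
  have hHdet : H.det ≠ 0 := ne_of_gt hHpos.det_pos
  have hBdet : B.det ≠ 0 := ne_of_gt hBpos.det_pos
  obtain ⟨x, hx0, hxsys⟩ := hilbert_solve n hn0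
  obtain ⟨y, hy0, hysys⟩ := bsolve n hn0
  have hsingle : ∀ i : Fin n, (Pi.single i0 (1:ℝ) : Fin n → ℝ) i
      = if i.val = 0 then 1 else 0 := by
    intro i
    rw [Pi.single_apply]
    congr 1
    simp only [eq_iff_iff]
    constructor
    · intro h; rw [h]
    · intro h; exact Fin.ext h
  have hxvec : H *ᵥ x = (Pi.single i0 1 : Fin n → ℝ) := by
    funext i
    rw [mulVec, dotProduct, hsingle i, ← hxsys i]
    refine Finset.sum_congr rfl fun j _ => ?_
    rw [hH, Matrix.of_apply]
    push_cast
    ring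
  have hyvec : B *ᵥ y = (Pi.single i0 1 : Fin n → ℝ) := by
    funext i
    rw [mulVec, dotProduct, hsingle i, ← hysys i]
    refine Finset.sum_congr rfl fun j _ => ?_
    rw [hB, Matrix.of_apply]
    push_cast
    ring
  have hM2eq : M₂ z = H.updateRow i0 (H i0 + (z-1) • (Pi.single i0 1 : Fin n → ℝ)) := by
    rw [hM₂ z]
    ext i j
    rw [Matrix.updateRow_apply]
    by_cases hii : i = i0
    · rw [if_pos hii, hii]
      simp only [Pi.add_apply, Pi.smul_apply, smul_eq_mul, hsingle j]
      by_cases hjj : j.val = 0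
      · rw [Matrix.of_apply, if_pos ⟨rfl, hjj⟩, if_pos hjj, hH, Matrix.of_apply]
        have : ((i0.val + j.val + 1 : ℕ) : ℝ) = 1 := by
          rw [hjj]; norm_num [hi0]
        rw [this]
        norm_num
      · rw [Matrix.of_apply, if_neg (by simp [hjj]), if_neg hjj, hH, Matrix.of_apply]
        ring
    · rw [if_neg hii, Matrix.of_apply, hH, Matrix.of_apply]
      have : ¬ (i.val = 0 ∧ j.val = 0) := by
        intro h
        exact hii (Fin.ext h.1)
      rw [if_neg this]
  have hM1eq : M₁ ξ = B.updateRow i0 (B i0 + (ξ-1/2) • (Pi.single i0 1 : Fin n → ℝ)) := by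
    rw [hM₁ ξ]
    ext i j
    rw [Matrix.updateRow_apply]
    by_cases hii : i = i0
    · rw [if_pos hii, hii]
      simp only [Pi.add_apply, Pi.smul_apply, smul_eq_mul, hsingle j]
      by_cases hjj : j.val = 0
      · rw [Matrix.of_apply, if_pos ⟨rfl, hjj⟩, if_pos hjj, hB, Matrix.of_apply]
        have h1 : ((i0.val + j.val + 1 : ℕ) : ℝ) = 1 := by
          rw [hjj]; norm_num [hi0]
        have h2 : ((i0.val + j.val + 2 : ℕ) : ℝ) = 2 := by
          rw [hjj]; norm_num [hi0]
        rw [h1, h2]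
        norm_num
      · rw [Matrix.of_apply, if_neg (by simp [hjj]), if_neg hjj, hB, Matrix.of_apply]
        ring
    · rw [if_neg hii, Matrix.of_apply, hB, Matrix.of_apply]
      have : ¬ (i.val = 0 ∧ j.val = 0) := by
        intro h
        exact hii (Fin.ext h.1)
      rw [if_neg this]
  rw [hM1eq, hM2eq, det_update i0 B y hyvec, det_update i0 H x hxvec, hx0, hy0]
  have hnne : (n:ℝ) ≠ 0 := by positivity
  have hfactor : 1 + (z - 1) * (n:ℝ)^2 = 1 + (ξ - 1/2) * ((n:ℝ)*((n:ℝ)+1)) := by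
    rw [hz]
    field_simp
    ring
  rw [hfactor]
  rw [_root_.mul_eq_zero, _root_.mul_eq_zero]
  simp [hHdet, hBdet]
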